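/- If U1 and U2 are independent beta random variables with parameters (a1,b1) and (a2,b2) respectively, and a2 = a1 + b1, then the product U1·U2 is a beta random variable with parameters (a1, b1 + b2). -/

import Mathlib

open MeasureTheory ProbabilityTheory Real Filter

/-- The density of a Beta(a,b) random variable on (0,1). -/
noncomputable def betaPDFReal (a b x : ℝ) : ℝ :=
  if 0 < x ∧ x < 1 then
    (Real.Gamma (a + b) / (Real.Gamma a * Real.Gamma b)) * x ^ (a - 1) * (1 - x) ^ (b - 1)
  else 0

/-- The Beta(a,b) probability measure on ℝ. -/
noncomputable def betaMeasure (a b : ℝ) : Measure ℝ :=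
  MeasureTheory.volume.withDensity (fun x => ENNReal.ofReal (_root_.betaPDFReal a b x))

/-- `X` is a beta random variable with parameters `(a, b)` on `(Ω, μ)`. -/
def HasBetaLaw {Ω : Type*} [MeasurableSpace Ω] (μ : Measure Ω) (X : Ω → ℝ) (a b : ℝ) : Prop :=
  Measurable X ∧ μ.map X = _root_.betaMeasure a b

lemma _root_.measurable_betaPDFReal (a b : ℝ) : Measurable (_root_.betaPDFReal a b) := by
  unfold _root_.betaPDFReal
  have hr : ∀ p : ℝ, Measurable fun x : ℝ => x ^ p := by intro p; measurability
  have hm : Measurable fun x : ℝ =>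
      (Real.Gamma (a + b) / (Real.Gamma a * Real.Gamma b)) * x ^ (a - 1) * (1 - x) ^ (b - 1) :=
    ((measurable_const.mul (hr (a - 1))).mul ((hr (b - 1)).comp (measurable_const.sub measurable_id)))
  exact Measurable.ite (measurableSet_Ioo (a := (0:ℝ)) (b := 1)) hm measurable_const

lemma betaPDFReal_nonneg {a b : ℝ} (ha : 0 < a) (hb : 0 < b) (x : ℝ) :
    0 ≤ _root_.betaPDFReal a b x := by
  unfold _root_.betaPDFReal
  split_ifs with h
  · have h1 := Real.Gamma_pos_of_pos ha
    have h2 := Real.Gamma_pos_of_pos hb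
    have h3 := Real.Gamma_pos_of_pos (add_pos ha hb)
    have h4 : (0:ℝ) ≤ x := h.1.le
    have h5 : (0:ℝ) ≤ 1 - x := by linarith [h.2]
    positivity
  · exact le_refl 0

lemma beta_lintegral {p q : ℝ} (hp : 0 < p) (hq : 0 < q) :
    ∫⁻ t in Set.Ioo (0:ℝ) 1, ENNReal.ofReal (t ^ (p - 1) * (1 - t) ^ (q - 1)) =
      ENNReal.ofReal (Real.Gamma p * Real.Gamma q / Real.Gamma (p + q)) := by
  have hpc : 0 < (p : ℂ).re := by simpa using hp
  have hqc : 0 < (q : ℂ).re := by simpa using hq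
  set rf : ℝ → ℝ := fun t => t ^ (p - 1) * (1 - t) ^ (q - 1) with hrf
  set cf : ℝ → ℂ := fun t => (t : ℂ) ^ ((p : ℂ) - 1) * (1 - (t : ℂ)) ^ ((q : ℂ) - 1) with hcf
  have heq : ∀ t ∈ Set.Icc (0:ℝ) 1, cf t = ((rf t : ℝ) : ℂ) := by
    intro t ht
    rw [hcf, hrf]
    simp only
    rw [Complex.ofReal_mul, Complex.ofReal_cpow ht.1,
      Complex.ofReal_cpow (by linarith [ht.2] : (0:ℝ) ≤ 1 - t)]
    push_cast
    ring
  have hbeta : Complex.betaIntegral p q = ((∫ t in (0:ℝ)..1, rf t : ℝ) : ℂ) := by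
    rw [Complex.betaIntegral, ← intervalIntegral.integral_ofReal]
    refine intervalIntegral.integral_congr ?_
    intro t ht
    rw [Set.uIcc_of_le zero_le_one] at ht
    exact heq t ht
  have hGpq : Real.Gamma (p + q) ≠ 0 := (Real.Gamma_pos_of_pos (by linarith)).ne'
  have hreal : ∫ t in (0:ℝ)..1, rf t = Real.Gamma p * Real.Gamma q / Real.Gamma (p + q) := by
    have hGamma := Complex.Gamma_mul_Gamma_eq_betaIntegral hpc hqc
    rw [hbeta] at hGamma
    have key : ((Real.Gamma p * Real.Gamma q : ℝ) : ℂ) =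
        ((Real.Gamma (p + q) * ∫ t in (0:ℝ)..1, rf t : ℝ) : ℂ) := by
      push_cast
      rw [← Complex.Gamma_ofReal, ← Complex.Gamma_ofReal, ← Complex.Gamma_ofReal]
      push_cast
      exact hGamma
    have key' := Complex.ofReal_injective key
    rw [eq_div_iff hGpq]
    linarith [key']
  have hInt : IntegrableOn rf (Set.Ioo (0:ℝ) 1) := by
    have h1 : IntervalIntegrable cf volume 0 1 := Complex.betaIntegral_convergent hpc hqc
    have h2 : IntegrableOn cf (Set.Ioo (0:ℝ) 1) := by
      refine (intervalIntegrable_iff.mp h1).mono_set ?_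
      rw [Set.uIoc_of_le zero_le_one]
      exact Set.Ioo_subset_Ioc_self
    refine IntegrableOn.congr_fun h2.norm ?_ measurableSet_Ioo
    intro t ht
    show ‖cf t‖ = rf t
    rw [heq t (Set.mem_Icc_of_Ioo ht)]
    rw [Complex.norm_real]
    exact Real.norm_of_nonneg
      (mul_nonneg (Real.rpow_nonneg ht.1.le _) (Real.rpow_nonneg (by linarith [ht.2]) _))
  have hnn : 0 ≤ᵐ[volume.restrict (Set.Ioo (0:ℝ) 1)] rf := by
    filter_upwards [ae_restrict_mem measurableSet_Ioo] with t ht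
    exact mul_nonneg (Real.rpow_nonneg ht.1.le _) (Real.rpow_nonneg (by linarith [ht.2]) _)
  rw [← MeasureTheory.ofReal_integral_eq_lintegral_ofReal hInt hnn]
  congr 1
  rw [← MeasureTheory.integral_Ioc_eq_integral_Ioo, ← intervalIntegral.integral_of_le zero_le_one]
  exact hreal

lemma lintegral_image_deriv {s : Set ℝ} {f f' : ℝ → ℝ}
    (hs : MeasurableSet s) (hf' : ∀ x ∈ s, HasDerivWithinAt f (f' x) s x)
    (hf : Set.InjOn f s) (g : ℝ → ENNReal) :
    ∫⁻ x in f '' s, g x = ∫⁻ x in s, ENNReal.ofReal |f' x| * g (f x) := by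
  simpa only [ContinuousLinearMap.det_toSpanSingleton] using
    MeasureTheory.lintegral_image_eq_lintegral_abs_det_fderiv_mul volume hs
      (fun x hx => (hf' x hx).hasFDerivWithinAt) hf g

lemma sub_lintegral {b1 b2 z : ℝ} (hb1 : 0 < b1) (hb2 : 0 < b2) (hz : 0 < z) (hz1 : z < 1) :
    ∫⁻ x in Set.Ioo z 1,
        ENNReal.ofReal (x ^ (-b1 - b2) * (1 - x) ^ (b1 - 1) * (x - z) ^ (b2 - 1)) =
      ENNReal.ofReal (z ^ (-b1) * (1 - z) ^ (b1 + b2 - 1) *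
        (Real.Gamma b1 * Real.Gamma b2 / Real.Gamma (b1 + b2))) := by
  have h1z : 0 < 1 - z := by linarith
  set φ : ℝ → ℝ := fun t => z / (z + (1 - z) * t) with hφ
  set ψ : ℝ → ℝ := fun t => -(z * (1 - z)) / (z + (1 - z) * t) ^ 2 with hψ
  have hD : ∀ t ∈ Set.Ioo (0:ℝ) 1, 0 < z + (1 - z) * t ∧ z + (1 - z) * t < 1 := by
    intro t ht
    constructor
    · nlinarith [ht.1]
    · nlinarith [ht.2]
  have himg : φ '' Set.Ioo 0 1 = Set.Ioo z 1 := by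
    ext x
    simp only [Set.mem_image, Set.mem_Ioo]
    constructor
    · rintro ⟨t, ⟨ht0, ht1⟩, rfl⟩
      have hDt : 0 < z + (1 - z) * t := by nlinarith
      have hDt1 : z + (1 - z) * t < 1 := by nlinarith
      constructor
      · rw [hφ]; simp only
        rw [lt_div_iff₀ hDt]; nlinarith
      · rw [hφ]; simp only
        rw [div_lt_one hDt]; nlinarith
    · rintro ⟨hx1, hx2⟩
      have hx0 : 0 < x := lt_trans hz hx1
      refine ⟨z * (1 - x) / (x * (1 - z)), ⟨?_, ?_⟩, ?_⟩
      · have h1x : 0 < 1 - x := by linarith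
        positivity
      · rw [div_lt_one (by positivity)]; nlinarith
      · rw [hφ]; simp only
        rw [div_eq_iff]
        · field_simp
          ring
        · have h1x : 0 < 1 - x := by linarith
          have : 0 < z + (1 - z) * (z * (1 - x) / (x * (1 - z))) := by positivity
          exact this.ne'
  have hder : ∀ t ∈ Set.Ioo (0:ℝ) 1, HasDerivWithinAt φ (ψ t) (Set.Ioo 0 1) t := by
    intro t ht
    have hDt : z + (1 - z) * t ≠ 0 := (hD t ht).1.ne'
    have hlin : HasDerivAt (fun y : ℝ => z + (1 - z) * y) (1 - z) t := by
      simpa using ((hasDerivAt_id t).const_mul (1 - z)).const_add z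
    have h2 := (hlin.inv hDt).const_mul z
    have hfun : φ = fun y : ℝ => z * (z + (1 - z) * y)⁻¹ := by
      funext y; rw [hφ]; simp [div_eq_mul_inv]
    have hval : ψ t = z * (-(1 - z) / (z + (1 - z) * t) ^ 2) := by rw [hψ]; ring
    rw [hfun, hval]
    exact h2.hasDerivWithinAt
  have hinj : Set.InjOn φ (Set.Ioo 0 1) := by
    intro s1 hs1 t1 ht1 h
    have h1 := (hD s1 hs1).1
    have h2 := (hD t1 ht1).1
    rw [hφ] at h; simp only at h
    rw [div_eq_div_iff h1.ne' h2.ne'] at h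
    have h3 : z + (1 - z) * t1 = z + (1 - z) * s1 := mul_left_cancel₀ hz.ne' h
    have h4 : (1 - z) * t1 = (1 - z) * s1 := by linarith
    have h5 := mul_left_cancel₀ h1z.ne' h4
    linarith
  rw [← himg, lintegral_image_deriv measurableSet_Ioo hder hinj]
  have hexp : ∀ A e : ℝ, Real.exp A ^ e = Real.exp (A * e) := fun A e => by
    rw [Real.rpow_def_of_pos (Real.exp_pos A), Real.log_exp]
  have hpt : ∀ t ∈ Set.Ioo (0:ℝ) 1,
      ENNReal.ofReal |ψ t| *
          ENNReal.ofReal (φ t ^ (-b1 - b2) * (1 - φ t) ^ (b1 - 1) * (φ t - z) ^ (b2 - 1)) =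
        ENNReal.ofReal (z ^ (-b1) * (1 - z) ^ (b1 + b2 - 1)) *
          ENNReal.ofReal (t ^ (b1 - 1) * (1 - t) ^ (b2 - 1)) := by
    intro t ht
    obtain ⟨ht0, ht1⟩ := ht
    obtain ⟨hD0, hD1⟩ := hD t ⟨ht0, ht1⟩
    have h1t : 0 < 1 - t := by linarith
    set D : ℝ := z + (1 - z) * t with hDdef
    have hφt : φ t = z / D := by rw [hφ]
    have habs : |ψ t| = z * (1 - z) / D ^ 2 := by
      rw [hψ]
      simp only
      rw [show -(z * (1 - z)) / D ^ 2 = -(z * (1 - z) / D ^ 2) by ring, abs_neg,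
        abs_of_nonneg (by positivity)]
    have h1φ : 1 - φ t = (1 - z) * t / D := by
      rw [hφt]; field_simp; ring
    have hφz : φ t - z = z * ((1 - z) * (1 - t)) / D := by
      rw [hφt]; field_simp; ring
    rw [← ENNReal.ofReal_mul (abs_nonneg _), ← ENNReal.ofReal_mul (by positivity)]
    congr 1
    rw [habs, hφt, h1φ, hφz]
    rw [Real.div_rpow hz.le hD0.le, Real.div_rpow (by positivity) hD0.le,
      Real.div_rpow (by positivity) hD0.le,
      Real.mul_rpow h1z.le ht0.le,
      Real.mul_rpow hz.le (by positivity),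
      Real.mul_rpow h1z.le h1t.le]
    rw [show z * (1 - z) / D ^ 2 = z ^ ((1:ℕ):ℝ) * (1 - z) ^ ((1:ℕ):ℝ) / D ^ ((2:ℕ):ℝ) by
      rw [Real.rpow_natCast, Real.rpow_natCast, Real.rpow_natCast, pow_one, pow_one]]
    rw [← Real.exp_log h1z, ← Real.exp_log h1t, ← Real.exp_log hD0, ← Real.exp_log hz,
      ← Real.exp_log ht0]
    simp only [hexp, div_eq_mul_inv, ← Real.exp_neg, ← Real.exp_add]
    rw [Real.exp_eq_exp]
    push_cast
    ring
  rw [setLIntegral_congr_fun measurableSet_Ioo hpt]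
  rw [lintegral_const_mul' _ _ ENNReal.ofReal_ne_top, beta_lintegral hb1 hb2,
    ← ENNReal.ofReal_mul (by positivity)]

lemma key_pointwise {a1 b1 b2 : ℝ} (ha1 : 0 < a1) (hb1 : 0 < b1) (hb2 : 0 < b2) (z : ℝ) :
    ∫⁻ x, ENNReal.ofReal (_root_.betaPDFReal a1 b1 x * x⁻¹ * _root_.betaPDFReal (a1 + b1) b2 (z / x)) =
      ENNReal.ofReal (_root_.betaPDFReal a1 (b1 + b2) z) := by
  have hexp : ∀ A e : ℝ, Real.exp A ^ e = Real.exp (A * e) := fun A e => by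
    rw [Real.rpow_def_of_pos (Real.exp_pos A), Real.log_exp]
  by_cases hz : 0 < z ∧ z < 1
  case neg =>
    have h0 : ∀ x : ℝ, _root_.betaPDFReal a1 b1 x * x⁻¹ * _root_.betaPDFReal (a1 + b1) b2 (z / x) = 0 := by
      intro x
      by_cases hx : 0 < x ∧ x < 1
      · have hno : ¬(0 < z / x ∧ z / x < 1) := by
          rintro ⟨c1, c2⟩
          rcases not_and_or.mp hz with h | h
          · push_neg at h
            have : z / x ≤ 0 := div_nonpos_of_nonpos_of_nonneg h hx.1.le
            linarith
          · push_neg at h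
            have hxz : x ≤ z := by linarith [hx.2]
            have : (1:ℝ) ≤ z / x := (one_le_div hx.1).mpr hxz
            linarith
        unfold _root_.betaPDFReal
        rw [if_neg hno, mul_zero]
      · unfold _root_.betaPDFReal
        rw [if_neg hx, zero_mul, zero_mul]
    simp only [h0, ENNReal.ofReal_zero, lintegral_zero]
    unfold _root_.betaPDFReal
    rw [if_neg hz, ENNReal.ofReal_zero]
  case pos =>
    obtain ⟨hz0, hz1⟩ := hz
    have h1z : 0 < 1 - z := by linarith
    have hzero : ∀ x ∉ Set.Ioo z 1,
        ENNReal.ofReal (_root_.betaPDFReal a1 b1 x * x⁻¹ * _root_.betaPDFReal (a1 + b1) b2 (z / x)) = 0 := by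
      intro x hx
      rw [Set.mem_Ioo, not_and_or] at hx
      by_cases hx01 : 0 < x ∧ x < 1
      · have hxz : x ≤ z := by
          rcases hx with h | h
          · push_neg at h; exact h
          · push_neg at h; linarith [hx01.2]
        have hno : ¬(0 < z / x ∧ z / x < 1) := by
          rintro ⟨c1, c2⟩
          have : (1:ℝ) ≤ z / x := (one_le_div hx01.1).mpr hxz
          linarith
        unfold _root_.betaPDFReal
        rw [if_neg hno, mul_zero, ENNReal.ofReal_zero]
      · unfold _root_.betaPDFReal
        rw [if_neg hx01, zero_mul, zero_mul, ENNReal.ofReal_zero]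
    have hsupp : ∫⁻ x, ENNReal.ofReal (_root_.betaPDFReal a1 b1 x * x⁻¹ *
          _root_.betaPDFReal (a1 + b1) b2 (z / x)) =
        ∫⁻ x in Set.Ioo z 1, ENNReal.ofReal (_root_.betaPDFReal a1 b1 x * x⁻¹ *
          _root_.betaPDFReal (a1 + b1) b2 (z / x)) := by
      rw [← lintegral_indicator measurableSet_Ioo]
      refine lintegral_congr fun x => ?_
      by_cases hx : x ∈ Set.Ioo z 1
      · rw [Set.indicator_of_mem hx]
      · rw [Set.indicator_of_notMem hx, hzero x hx]
    rw [hsupp]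
    set C1 : ℝ := Real.Gamma (a1 + b1) / (Real.Gamma a1 * Real.Gamma b1) with hC1
    set C2 : ℝ := Real.Gamma (a1 + b1 + b2) / (Real.Gamma (a1 + b1) * Real.Gamma b2) with hC2
    have hGa1 : 0 < Real.Gamma a1 := Real.Gamma_pos_of_pos ha1
    have hGb1 : 0 < Real.Gamma b1 := Real.Gamma_pos_of_pos hb1
    have hGb2 : 0 < Real.Gamma b2 := Real.Gamma_pos_of_pos hb2
    have hGa1b1 : 0 < Real.Gamma (a1 + b1) := Real.Gamma_pos_of_pos (by linarith)
    have hGb1b2 : 0 < Real.Gamma (b1 + b2) := Real.Gamma_pos_of_pos (by linarith)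
    have hGall : 0 < Real.Gamma (a1 + b1 + b2) := Real.Gamma_pos_of_pos (by linarith)
    have hC1pos : 0 < C1 := by rw [hC1]; positivity
    have hC2pos : 0 < C2 := by rw [hC2]; positivity
    have hpt : ∀ x ∈ Set.Ioo z 1,
        ENNReal.ofReal (_root_.betaPDFReal a1 b1 x * x⁻¹ * _root_.betaPDFReal (a1 + b1) b2 (z / x)) =
          ENNReal.ofReal (C1 * C2 * z ^ (a1 + b1 - 1)) *
            ENNReal.ofReal (x ^ (-b1 - b2) * (1 - x) ^ (b1 - 1) * (x - z) ^ (b2 - 1)) := by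
      intro x hx
      obtain ⟨hxz, hx1⟩ := hx
      have hx0 : 0 < x := lt_trans hz0 hxz
      have h1x : 0 < 1 - x := by linarith
      have hxz' : 0 < x - z := by linarith
      have hdx : 0 < z / x := by positivity
      have hdx1 : z / x < 1 := (div_lt_one hx0).mpr hxz
      unfold _root_.betaPDFReal
      rw [if_pos ⟨hx0, hx1⟩, if_pos ⟨hdx, hdx1⟩]
      rw [← ENNReal.ofReal_mul (by positivity)]
      congr 1
      have hbase : 1 - z / x = (x - z) / x := by field_simp
      rw [hbase, Real.div_rpow hz0.le hx0.le, Real.div_rpow hxz'.le hx0.le]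
      have hpure : x ^ (a1 - 1) * (1 - x) ^ (b1 - 1) * x⁻¹ *
          (z ^ (a1 + b1 - 1) / x ^ (a1 + b1 - 1) * ((x - z) ^ (b2 - 1) / x ^ (b2 - 1))) =
          z ^ (a1 + b1 - 1) * (x ^ (-b1 - b2) * (1 - x) ^ (b1 - 1) * (x - z) ^ (b2 - 1)) := by
        rw [← Real.exp_log h1x, ← Real.exp_log hxz', ← Real.exp_log hz0, ← Real.exp_log hx0]
        simp only [hexp, div_eq_mul_inv, ← Real.exp_neg, ← Real.exp_add]
        rw [Real.exp_eq_exp]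
        ring
      linear_combination (C1 * C2) * hpure
    rw [setLIntegral_congr_fun measurableSet_Ioo hpt,
      lintegral_const_mul' _ _ ENNReal.ofReal_ne_top,
      sub_lintegral hb1 hb2 hz0 hz1,
      ← ENNReal.ofReal_mul (by positivity)]
    unfold _root_.betaPDFReal
    rw [if_pos ⟨hz0, hz1⟩]
    congr 1
    have hzz : z ^ (a1 + b1 - 1) * z ^ (-b1) = z ^ (a1 - 1) := by
      rw [← Real.rpow_add hz0]
      congr 1
      ring
    rw [hC1, hC2, show a1 + (b1 + b2) = a1 + b1 + b2 by ring, ← hzz]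
    field_simp

lemma beta_map_mul {a1 b1 b2 : ℝ} (ha1 : 0 < a1) (hb1 : 0 < b1) (hb2 : 0 < b2) :
    Measure.map (fun p : ℝ × ℝ => p.1 * p.2)
        ((_root_.betaMeasure a1 b1).prod (_root_.betaMeasure (a1 + b1) b2)) = _root_.betaMeasure a1 (b1 + b2) := by
  have hf1 : Measurable fun x => ENNReal.ofReal (_root_.betaPDFReal a1 b1 x) :=
    (_root_.measurable_betaPDFReal a1 b1).ennreal_ofReal
  ext s hs
  have hmul : Measurable fun p : ℝ × ℝ => p.1 * p.2 := measurable_fst.mul measurable_snd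
  rw [Measure.map_apply hmul hs]
  rw [_root_.betaMeasure, _root_.betaMeasure, _root_.betaMeasure]
  rw [Measure.prod_apply (hmul hs)]
  rw [lintegral_withDensity_eq_lintegral_mul volume hf1
    (measurable_measure_prodMk_left (hmul hs))]
  simp only [Pi.mul_apply]
  have hstep : ∀ x : ℝ,
      ENNReal.ofReal (_root_.betaPDFReal a1 b1 x) *
          ((volume.withDensity fun y => ENNReal.ofReal (_root_.betaPDFReal (a1 + b1) b2 y))
            (Prod.mk x ⁻¹' ((fun p : ℝ × ℝ => p.1 * p.2) ⁻¹' s))) =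
        ∫⁻ z, ENNReal.ofReal (_root_.betaPDFReal a1 b1 x * x⁻¹ * _root_.betaPDFReal (a1 + b1) b2 (z / x)) *
          s.indicator 1 z := by
    intro x
    by_cases hx : 0 < x ∧ x < 1
    · have hx0 := hx.1
      have hpre : (Prod.mk x ⁻¹' ((fun p : ℝ × ℝ => p.1 * p.2) ⁻¹' s)) =
          (fun y => x * y) ⁻¹' s := rfl
      have hmeas_pre : MeasurableSet ((fun y => x * y) ⁻¹' s) := (measurable_const_mul x) hs
      set Φ : ℝ → ENNReal :=
        fun w => ENNReal.ofReal (_root_.betaPDFReal (a1 + b1) b2 (w / x)) * s.indicator 1 w with hΦ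
      have hΦmeas : Measurable Φ :=
        (((_root_.measurable_betaPDFReal _ _).comp (measurable_id.div_const x)).ennreal_ofReal).mul
          (measurable_one.indicator hs)
      have hν2 : (volume.withDensity fun y => ENNReal.ofReal (_root_.betaPDFReal (a1 + b1) b2 y))
          ((fun y => x * y) ⁻¹' s) = ∫⁻ y, Φ (x * y) := by
        rw [withDensity_apply _ hmeas_pre, ← lintegral_indicator hmeas_pre]
        refine lintegral_congr fun y => ?_
        by_cases hy : x * y ∈ s
        · rw [Set.indicator_of_mem (by exact hy : y ∈ (fun y => x * y) ⁻¹' s), hΦ]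
          simp only
          rw [Set.indicator_of_mem hy, mul_div_cancel_left₀ _ (ne_of_gt hx0), Pi.one_apply,
            mul_one]
        · rw [Set.indicator_of_notMem (by exact hy : y ∉ (fun y => x * y) ⁻¹' s), hΦ]
          simp only
          rw [Set.indicator_of_notMem hy, mul_zero]
      have hmap : ∫⁻ y, Φ (x * y) = ENNReal.ofReal |x⁻¹| * ∫⁻ w, Φ w := by
        rw [← lintegral_map hΦmeas (measurable_const_mul x),
          Real.map_volume_mul_left (ne_of_gt hx0), lintegral_smul_measure, smul_eq_mul]
      rw [hpre, hν2, hmap, abs_of_nonneg (inv_nonneg.mpr hx0.le)]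
      rw [← mul_assoc, ← ENNReal.ofReal_mul (betaPDFReal_nonneg ha1 hb1 x)]
      rw [← lintegral_const_mul' _ _ ENNReal.ofReal_ne_top]
      refine lintegral_congr fun w => ?_
      rw [hΦ]
      simp only
      rw [← mul_assoc,
        ← ENNReal.ofReal_mul (mul_nonneg (betaPDFReal_nonneg ha1 hb1 x) (inv_nonneg.mpr hx0.le))]
  -- x outside (0,1)
    · have hzero : _root_.betaPDFReal a1 b1 x = 0 := by unfold _root_.betaPDFReal; rw [if_neg hx]
      simp only [hzero, zero_mul, ENNReal.ofReal_zero, lintegral_zero]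
  rw [lintegral_congr hstep]
  have hjoint : Measurable (fun q : ℝ × ℝ =>
      ENNReal.ofReal (_root_.betaPDFReal a1 b1 q.1 * q.1⁻¹ * _root_.betaPDFReal (a1 + b1) b2 (q.2 / q.1)) *
        s.indicator 1 q.2) := by
    refine Measurable.mul ?_ ((measurable_one.indicator hs).comp measurable_snd)
    refine Measurable.ennreal_ofReal ?_
    exact (((_root_.measurable_betaPDFReal a1 b1).comp measurable_fst).mul
      measurable_fst.inv).mul
      ((_root_.measurable_betaPDFReal (a1 + b1) b2).comp (measurable_snd.div measurable_fst))
  rw [lintegral_lintegral_swap hjoint.aemeasurable]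
  have hinner : ∀ z : ℝ,
      (∫⁻ x, ENNReal.ofReal (_root_.betaPDFReal a1 b1 x * x⁻¹ * _root_.betaPDFReal (a1 + b1) b2 (z / x)) *
        s.indicator 1 z) = ENNReal.ofReal (_root_.betaPDFReal a1 (b1 + b2) z) * s.indicator 1 z := by
    intro z
    rw [lintegral_mul_const' _ _ (by by_cases h : z ∈ s <;> simp [h]),
      key_pointwise ha1 hb1 hb2 z]
  rw [lintegral_congr hinner]
  rw [withDensity_apply _ hs, ← lintegral_indicator hs]
  refine lintegral_congr fun z => ?_
  by_cases h : z ∈ s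
  · rw [Set.indicator_of_mem h, Set.indicator_of_mem h, Pi.one_apply, mul_one]
  · rw [Set.indicator_of_notMem h, Set.indicator_of_notMem h, mul_zero]


theorem beta_product_rule {Ω : Type*} [MeasurableSpace Ω] (μ : Measure Ω) [IsProbabilityMeasure μ]
    (U1 U2 : Ω → ℝ) (a1 b1 a2 b2 : ℝ) (ha1 : 0 < a1) (hb1 : 0 < b1) (hb2 : 0 < b2)
    (h1 : HasBetaLaw μ U1 a1 b1) (h2 : HasBetaLaw μ U2 a2 b2)
    (hind : IndepFun U1 U2 μ) (hchain : a2 = a1 + b1) :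
    HasBetaLaw μ (fun ω => U1 ω * U2 ω) a1 (b1 + b2) := by
  obtain ⟨hU1, hm1⟩ := h1
  obtain ⟨hU2, hm2⟩ := h2
  refine ⟨hU1.mul hU2, ?_⟩
  have hpair : μ.map (fun ω => (U1 ω, U2 ω)) = (μ.map U1).prod (μ.map U2) :=
    (indepFun_iff_map_prod_eq_prod_map_map hU1.aemeasurable hU2.aemeasurable).mp hind
  have hcomp : (fun ω => U1 ω * U2 ω) =
      (fun p : ℝ × ℝ => p.1 * p.2) ∘ (fun ω => (U1 ω, U2 ω)) := rfl
  rw [hcomp, ← Measure.map_map (g := fun p : ℝ × ℝ => p.1 * p.2) (measurable_fst.mul measurable_snd) (hU1.prodMk hU2), hpair,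
    hm1, hm2, hchain]
  exact beta_map_mul ha1 hb1 hb2
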